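/- Let N ∈ ℕ, n ∈ {1,…,N}, and Z = (z_{j,k}) ∈ ℂ^{N×n}. With z̃_k, a_{j,k}, U_j(x), G_m(Z) as defined, one has G_0(Z) = ∏_{k=1}^n z̃_k and G_1(Z) = 0. -/

import Mathlib

open scoped BigOperators

/-- The permanent of a rectangular complex matrix `Z ∈ ℂ^{N×n}` (`n ≤ N`):
`per(Z) = ∑_{j ∈ [N]^n_≠} ∏_{k=1}^n z_{j_k,k}`, i.e. the sum over injective
maps `Fin n → Fin N`. -/
noncomputable def rectPermanent {N n : ℕ} (Z : Matrix (Fin N) (Fin n) ℂ) : ℂ :=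
  ∑ j ∈ Finset.univ.filter (fun j : Fin n → Fin N => Function.Injective j),
    ∏ k : Fin n, Z (j k) k

/-- `z̃_k = (1/N) ∑_{j=1}^N z_{j,k}`, the `k`-th column mean. -/
noncomputable def ztilde {N n : ℕ} (Z : Matrix (Fin N) (Fin n) ℂ) (k : Fin n) : ℂ :=
  (N : ℂ)⁻¹ * ∑ j : Fin N, Z j k

/-- `a_{j,k} = z_{j,k} − z̃_k`. -/
noncomputable def aEnt {N n : ℕ} (Z : Matrix (Fin N) (Fin n) ℂ) (j : Fin N) (k : Fin n) : ℂ :=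
  Z j k - ztilde Z k

/-- `G_m(Z) = ((N−m)!/((n−m)!·N!)) · [x_1⋯x_n]((∏_j (1+U_j(x)))·(∑_k z̃_k x_k)^{n−m})`,
where `U_j(x) = ∑_k a_{j,k} x_k` and `[x_1⋯x_n]` denotes the coefficient of the
monomial `x_1⋯x_n` (the `MvPolynomial` coefficient at exponent `∑ k, Finsupp.single k 1`). -/
noncomputable def GZ {N n : ℕ} (Z : Matrix (Fin N) (Fin n) ℂ) (m : ℕ) : ℂ :=
  ((N - m).factorial : ℂ) / (((n - m).factorial : ℂ) * (N.factorial : ℂ)) *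
    MvPolynomial.coeff (∑ k : Fin n, Finsupp.single k 1)
      ((∏ j : Fin N,
          (1 + ∑ k : Fin n, MvPolynomial.C (aEnt Z j k) * MvPolynomial.X k)) *
        (∑ k : Fin n, MvPolynomial.C (ztilde Z k) * MvPolynomial.X k) ^ (n - m))

/-- `H_ℓ(Z) = ∑_{m=0}^ℓ G_m(Z)`. -/
noncomputable def HZ {N n : ℕ} (Z : Matrix (Fin N) (Fin n) ℂ) (ℓ : ℕ) : ℂ :=
  ∑ m ∈ Finset.range (ℓ + 1), GZ Z m

/-- `C_ℓ = (e^ℓ · ℓ! / ℓ^{ℓ+1/2})^{1/2}`. -/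
noncomputable def Cconst (ℓ : ℕ) : ℝ :=
  Real.sqrt (Real.exp ℓ * ℓ.factorial / (ℓ : ℝ) ^ ((ℓ : ℝ) + 1 / 2))

/-- `α = (1/(nN)) ∑_{j=1}^N ∑_{k=1}^n |a_{j,k}|²`. -/
noncomputable def alphaZ {N n : ℕ} (Z : Matrix (Fin N) (Fin n) ℂ) : ℝ :=
  ((n : ℝ) * N)⁻¹ * ∑ j : Fin N, ∑ k : Fin n, ‖aEnt Z j k‖ ^ 2

/-- `β = (1/n) ∑_{k=1}^n |z̃_k|²`. -/
noncomputable def betaZ {N n : ℕ} (Z : Matrix (Fin N) (Fin n) ℂ) : ℝ :=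
  (n : ℝ)⁻¹ * ∑ k : Fin n, ‖ztilde Z k‖ ^ 2

/-- `γ(d) = (nα/N)·min{dn, 1/(1−β)}`; for `β = 1` the quantity `1/(1−β)` is `+∞`,
so the minimum is interpreted as `dn`. `γ = γ(1)`. -/
noncomputable def gammaZ {N n : ℕ} (Z : Matrix (Fin N) (Fin n) ℂ) (d : ℝ) : ℝ :=
  (n : ℝ) * alphaZ Z / N *
    (if betaZ Z < 1 then min (d * n) (1 / (1 - betaZ Z)) else d * n)

open MvPolynomial Finset Function

lemma degree_dsum (n : ℕ) : (∑ k : Fin n, Finsupp.single k 1).degree = n := by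
  rw [Finsupp.degree_eq_weight_one, map_sum]
  simp [Finsupp.weight_apply, Finsupp.sum_single_index]

lemma lin_homog {n : ℕ} (c : Fin n → ℂ) :
    MvPolynomial.IsHomogeneous (∑ k : Fin n, MvPolynomial.C (c k) * MvPolynomial.X k) 1 :=
  MvPolynomial.IsHomogeneous.sum _ _ _ (fun k _ => by
    simpa using (MvPolynomial.isHomogeneous_C _ (c k)).mul (MvPolynomial.isHomogeneous_X _ k))

lemma sum_single_eq_iff {n : ℕ} (g : Fin n → Fin n) :
    (∑ i : Fin n, Finsupp.single (g i) (1:ℕ)) = ∑ k : Fin n, Finsupp.single k 1 ↔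
      Function.Bijective g := by
  constructor
  · intro h
    refine Finite.surjective_iff_bijective.mp ?_
    intro k
    have hk := DFunLike.congr_fun h k
    simp only [Finsupp.finset_sum_apply, Finsupp.single_apply] at hk
    by_contra hc
    push_neg at hc
    have : (∑ i : Fin n, if g i = k then (1:ℕ) else 0) = 0 := by
      exact Finset.sum_eq_zero (fun i _ => by simp [hc i])
    rw [this] at hk
    simp at hk
  · intro hg
    exact Fintype.sum_bijective g hg _ _ (fun i => rfl)

lemma card_bij_filter (n : ℕ) :
    (Finset.univ.filter (fun g : Fin n → Fin n => Function.Bijective g)).card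
      = n.factorial := by
  have e : Equiv.Perm (Fin n) ≃ {g : Fin n → Fin n // Function.Bijective g} :=
    { toFun := fun σ => ⟨σ, σ.bijective⟩
      invFun := fun g => Equiv.ofBijective g.1 g.2
      left_inv := fun σ => Equiv.ext fun x => rfl
      right_inv := fun g => Subtype.ext rfl }
  rw [← Fintype.card_subtype, ← Fintype.card_congr e, Fintype.card_perm, Fintype.card_fin]

lemma coeff_linpow {n : ℕ} (c : Fin n → ℂ) :
    MvPolynomial.coeff (∑ k : Fin n, Finsupp.single k 1)
      ((∑ k : Fin n, MvPolynomial.C (c k) * MvPolynomial.X k) ^ n)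
      = (n.factorial : ℂ) * ∏ k, c k := by
  classical
  have h1 : ((∑ k : Fin n, MvPolynomial.C (c k) * MvPolynomial.X k) ^ n)
      = ∏ _i : Fin n, (∑ k : Fin n, MvPolynomial.C (c k) * MvPolynomial.X k) := by
    simp
  rw [h1, Finset.prod_univ_sum]
  have h2 : ∀ g : Fin n → Fin n,
      (∏ i : Fin n, MvPolynomial.C (c (g i)) * MvPolynomial.X (g i))
        = monomial (∑ i : Fin n, Finsupp.single (g i) 1) (∏ i, c (g i)) := by
    intro g
    rw [Finset.prod_mul_distrib, ← map_prod, monomial_sum_index]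
    congr 1
  simp only [Fintype.piFinset_univ]  -- maybe
  rw [MvPolynomial.coeff_sum]
  simp only [h2, MvPolynomial.coeff_monomial]
  rw [Finset.sum_congr rfl (fun g _ => by
    rw [show (if (∑ i, Finsupp.single (g i) 1) = (∑ k : Fin n, Finsupp.single k 1)
        then (∏ i, c (g i)) else 0)
      = (if Function.Bijective g then (∏ k, c k) else 0) from by
      by_cases hg : Function.Bijective g
      · rw [if_pos ((sum_single_eq_iff g).mpr hg), if_pos hg]
        exact Fintype.prod_bijective g hg _ _ (fun i => rfl)
      · rw [if_neg (fun h => hg ((sum_single_eq_iff g).mp h)), if_neg hg]])]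
  rw [← Finset.sum_filter, Finset.sum_const, card_bij_filter, nsmul_eq_mul]

lemma expand_coeff (N n : ℕ) (U : Fin N → MvPolynomial (Fin n) ℂ)
    (L : MvPolynomial (Fin n) ℂ) (p : ℕ) :
    MvPolynomial.coeff (∑ k : Fin n, Finsupp.single k 1)
      ((∏ j : Fin N, (1 + U j)) * L ^ p)
      = ∑ t : Finset (Fin N),
          MvPolynomial.coeff (∑ k : Fin n, Finsupp.single k 1)
            ((∏ j ∈ tᶜ, U j) * L ^ p) := by
  classical
  rw [Finset.prod_add, Finset.sum_mul, MvPolynomial.coeff_sum]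
  simp [Finset.compl_eq_univ_sdiff]

lemma term_homog {N n : ℕ} (t : Finset (Fin N)) (U : Fin N → MvPolynomial (Fin n) ℂ)
    (hU : ∀ j, MvPolynomial.IsHomogeneous (U j) 1)
    (L : MvPolynomial (Fin n) ℂ) (hL : MvPolynomial.IsHomogeneous L 1) (p : ℕ) :
    MvPolynomial.IsHomogeneous ((∏ j ∈ tᶜ, U j) * L ^ p) (tᶜ.card + p) := by
  have h1 : MvPolynomial.IsHomogeneous (∏ j ∈ tᶜ, U j) tᶜ.card := by
    have := MvPolynomial.IsHomogeneous.prod tᶜ U (fun _ => 1) (fun j _ => hU j)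
    simpa using this
  simpa using h1.mul (hL.pow p)

/-- `G_0(Z) = ∏_{k=1}^n z̃_k` and `G_1(Z) = 0`. -/
theorem stmt15 (N n : ℕ) (hn1 : 1 ≤ n) (hnN : n ≤ N)
    (Z : Matrix (Fin N) (Fin n) ℂ) :
    GZ Z 0 = ∏ k : Fin n, ztilde Z k ∧ GZ Z 1 = 0 := by
  classical
  have hNne : (N:ℂ) ≠ 0 := Nat.cast_ne_zero.mpr (by omega)
  have hdeg : (∑ k : Fin n, Finsupp.single k (1:ℕ)).degree = n := degree_dsum n
  have hLh : MvPolynomial.IsHomogeneous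
      (∑ k : Fin n, MvPolynomial.C (ztilde Z k) * MvPolynomial.X k) 1 := lin_homog _
  have hUh : ∀ j : Fin N, MvPolynomial.IsHomogeneous
      (∑ k : Fin n, MvPolynomial.C (aEnt Z j k) * MvPolynomial.X k) 1 := fun j => lin_homog _
  constructor
  · simp only [GZ, Nat.sub_zero]
    rw [expand_coeff N n (fun j => ∑ k : Fin n, MvPolynomial.C (aEnt Z j k) * MvPolynomial.X k)
      (∑ k : Fin n, MvPolynomial.C (ztilde Z k) * MvPolynomial.X k) n]
    rw [Finset.sum_eq_single Finset.univ]
    · rw [show (Finset.univ : Finset (Fin N))ᶜ = ∅ from by simp, Finset.prod_empty, one_mul,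
        coeff_linpow]
      have h1 : ((n.factorial : ℂ)) ≠ 0 := Nat.cast_ne_zero.mpr (Nat.factorial_ne_zero n)
      have h2 : ((N.factorial : ℂ)) ≠ 0 := Nat.cast_ne_zero.mpr (Nat.factorial_ne_zero N)
      field_simp
    · intro t _ ht
      apply (term_homog t _ hUh _ hLh n).coeff_eq_zero
      rw [hdeg]
      have hc : tᶜ.card ≠ 0 := fun h => ht (by
        simpa [Finset.card_eq_zero, Finset.compl_eq_empty_iff] using h)
      omega
    · simp
  · simp only [GZ]
    apply mul_eq_zero_of_right
    rw [expand_coeff N n (fun j => ∑ k : Fin n, MvPolynomial.C (aEnt Z j k) * MvPolynomial.X k)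
      (∑ k : Fin n, MvPolynomial.C (ztilde Z k) * MvPolynomial.X k) (n - 1)]
    have hterm : ∀ t : Finset (Fin N),
        MvPolynomial.coeff (∑ k : Fin n, Finsupp.single k 1)
          ((∏ j ∈ tᶜ, ∑ k : Fin n, MvPolynomial.C (aEnt Z j k) * MvPolynomial.X k) *
            (∑ k : Fin n, MvPolynomial.C (ztilde Z k) * MvPolynomial.X k) ^ (n - 1))
        = if tᶜ.card = 1 then
            MvPolynomial.coeff (∑ k : Fin n, Finsupp.single k 1)
              ((∏ j ∈ tᶜ, ∑ k : Fin n, MvPolynomial.C (aEnt Z j k) * MvPolynomial.X k) *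
                (∑ k : Fin n, MvPolynomial.C (ztilde Z k) * MvPolynomial.X k) ^ (n - 1))
          else 0 := by
      intro t
      split
      · rfl
      · next h =>
        apply (term_homog t _ hUh _ hLh (n-1)).coeff_eq_zero
        rw [hdeg]
        omega
    rw [Finset.sum_congr rfl (fun t _ => hterm t), ← Finset.sum_filter]
    have himg : Finset.univ.filter (fun t : Finset (Fin N) => tᶜ.card = 1)
        = Finset.univ.image (fun j : Fin N => ({j} : Finset (Fin N))ᶜ) := by
      ext t
      simp only [Finset.mem_filter, Finset.mem_univ, true_and, Finset.mem_image,
        Finset.card_eq_one]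
      constructor
      · rintro ⟨a, ha⟩; exact ⟨a, by rw [← ha, compl_compl]⟩
      · rintro ⟨a, _, rfl⟩; exact ⟨a, by rw [compl_compl]⟩
    rw [himg, Finset.sum_image (fun a _ b _ h =>
      Finset.singleton_injective (compl_injective h))]
    simp only [compl_compl, Finset.prod_singleton]
    have hcoe : ∑ j : Fin N,
        MvPolynomial.coeff (∑ k : Fin n, Finsupp.single k 1)
          ((∑ k : Fin n, MvPolynomial.C (aEnt Z j k) * MvPolynomial.X k) *
            (∑ k : Fin n, MvPolynomial.C (ztilde Z k) * MvPolynomial.X k) ^ (n - 1))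
        = MvPolynomial.coeff (∑ k : Fin n, Finsupp.single k 1)
          ((∑ j : Fin N, ∑ k : Fin n, MvPolynomial.C (aEnt Z j k) * MvPolynomial.X k) *
            (∑ k : Fin n, MvPolynomial.C (ztilde Z k) * MvPolynomial.X k) ^ (n - 1)) := by
      rw [Finset.sum_mul, MvPolynomial.coeff_sum]
    rw [hcoe]
    have hz : (∑ j : Fin N, ∑ k : Fin n, MvPolynomial.C (aEnt Z j k) * MvPolynomial.X k)
        = 0 := by
      rw [Finset.sum_comm]
      refine Finset.sum_eq_zero (fun k _ => ?_)
      rw [← Finset.sum_mul, ← map_sum]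
      have : ∑ j : Fin N, aEnt Z j k = 0 := by
        simp only [aEnt, ztilde, Finset.sum_sub_distrib, Finset.sum_const,
          Finset.card_univ, Fintype.card_fin, nsmul_eq_mul]
        field_simp
        ring
      rw [this, map_zero, zero_mul]
    rw [hz, zero_mul, MvPolynomial.coeff_zero]
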